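/- Let Fib denote the Fibonacci numbers with Fib(1) = Fib(2) = 1 and Fib(k+2) = Fib(k) + Fib(k+1). Let a be a character, n ≥ 1, and let F₁⋯F_z be the LZMW factorization of the unary string aⁿ. Then for every x ≥ 1 with Fib(x+2) − 1 ≤ n, the factor F_x equals a^{Fib(x)}; that is, the factor lengths follow the Fibonacci numbers 1, 1, 2, 3, 5, 8, … as long as enough text remains. -/

import Mathlib

/-- The LZMW parsing dictionary available for the factor at (0-indexed) position `x`:
all concatenations of two consecutive factors both completed before position `x`,
together with all length-one strings. -/
def LZMWDict {α : Type*} (F : List (List α)) (x : ℕ) : Set (List α) :=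
  { w | (∃ i, 1 ≤ i ∧ i < x ∧ w = F.getD (i - 1) [] ++ F.getD i []) ∨ (∃ c : α, w = [c]) }

/-- `F` is the LZMW factorization of `T`: the factors concatenate to `T`, and each factor
is the longest prefix of the remaining text contained in the current LZMW dictionary. -/
def IsLZMW {α : Type*} (T : List α) (F : List (List α)) : Prop :=
  F.flatten = T ∧
  ∀ x < F.length,
    F.getD x [] ∈ LZMWDict F x ∧
    ∀ w ∈ LZMWDict F x, w <+: (F.drop x).flatten → w.length ≤ (F.getD x []).length

/-- In the LZMW factorization of the unary string `T = aⁿ` (`n ≥ 1`), for every `x ≥ 1`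
with `Fib(x+2) − 1 ≤ n`, the `x`-th factor (1-indexed) equals `a^(Fib x)`
(with `Fib 1 = Fib 2 = 1`): the factor lengths follow the Fibonacci numbers
`1, 1, 2, 3, 5, 8, …` as long as enough text remains. -/
theorem lzmw_unary_factors {α : Type*} (a : α) (n : ℕ) (hn : 1 ≤ n)
    (F : List (List α)) (hF : IsLZMW (List.replicate n a) F) :
    ∀ x : ℕ, 1 ≤ x → Nat.fib (x + 2) - 1 ≤ n →
      x - 1 < F.length ∧ F.getD (x - 1) [] = List.replicate (Nat.fib x) a := by
  obtain ⟨hflat, hmax⟩ := hF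
  -- each factor is a replicate of `a`
  have hrep : ∀ k, k < F.length →
      F.getD k [] = List.replicate (F.getD k []).length a := by
    intro k hk
    apply List.eq_replicate_of_mem
    intro b hb
    have hmem : F.getD k [] ∈ F := by
      rw [List.getD_eq_getElem F [] hk]; exact List.getElem_mem hk
    have hbf : b ∈ F.flatten := List.mem_flatten.2 ⟨_, hmem, hb⟩
    rw [hflat] at hbf
    exact List.eq_of_mem_replicate hbf
  -- given the prefix sum, the next index is in range
  have hinrange : ∀ m, (F.take m).flatten = List.replicate (Nat.fib (m+2) - 1) a →
      Nat.fib (m+3) - 1 ≤ n → m < F.length := by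
    intro m ht hm
    by_contra h
    push_neg at h
    have : F.take m = F := List.take_of_length_le h
    rw [this, hflat] at ht
    have hlen := congrArg List.length ht
    simp only [List.length_replicate] at hlen
    have h1 : 0 < Nat.fib (m+1) := Nat.fib_pos.2 (by omega)
    have h2 : Nat.fib (m+3) = Nat.fib (m+1) + Nat.fib (m+2) := by
      have h3 := Nat.fib_add_two (n := m+1)
      rwa [show m+1+2 = m+3 from rfl, show m+1+1 = m+2 from rfl] at h3
    omega
  -- the remaining text is a replicate
  have hdropgen : ∀ m, (F.take m).flatten = List.replicate (Nat.fib (m+2) - 1) a →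
      (F.drop m).flatten = List.replicate (n - (Nat.fib (m+2) - 1)) a := by
    intro m ht
    have e : List.replicate (Nat.fib (m+2) - 1) a ++ (F.drop m).flatten
        = List.replicate n a := by
      rw [← ht, ← List.flatten_append, List.take_append_drop, hflat]
    have e3 : List.drop (Nat.fib (m+2) - 1)
        (List.replicate (Nat.fib (m+2) - 1) a ++ (F.drop m).flatten)
        = (F.drop m).flatten := List.drop_left' List.length_replicate
    rw [e, List.drop_replicate] at e3
    exact e3.symm
  -- take (k+1) splits off the k-th factor
  have htakesucc : ∀ k, k < F.length →
      (F.take (k+1)).flatten = (F.take k).flatten ++ F.getD k [] := by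
    intro k hk
    rw [List.take_succ, List.flatten_append, List.getD_eq_getElem F [] hk]
    simp [List.getElem?_eq_getElem hk]
  -- the Fibonacci recurrence, normalized
  have hfib : ∀ m : ℕ, Nat.fib (m+3) = Nat.fib (m+1) + Nat.fib (m+2) := by
    intro m
    have h3 := Nat.fib_add_two (n := m+1)
    rwa [show m+1+2 = m+3 from rfl, show m+1+1 = m+2 from rfl] at h3
  -- main induction
  have main : ∀ k, Nat.fib (k+3) - 1 ≤ n →
      k < F.length ∧ F.getD k [] = List.replicate (Nat.fib (k+1)) a ∧
      (F.take (k+1)).flatten = List.replicate (Nat.fib (k+3) - 1) a := by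
    intro k
    induction k using Nat.strong_induction_on with
    | _ k IH =>
      intro hkn
      -- prefix sum up to k
      have htake : (F.take k).flatten = List.replicate (Nat.fib (k+2) - 1) a := by
        rcases Nat.eq_zero_or_pos k with hk0 | hk1
        · subst hk0; simp
        · obtain ⟨k', rfl⟩ : ∃ k', k = k' + 1 := ⟨k - 1, by omega⟩
          rw [show k'+1+3 = k'+4 from rfl] at hkn
          have hmono : Nat.fib (k'+3) ≤ Nat.fib (k'+4) := Nat.fib_mono (by omega)
          have h33 := (IH k' (by omega) (by omega)).2.2
          rwa [show k'+1+2 = k'+3 from rfl]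
      have hklen : k < F.length := hinrange k htake hkn
      have hdrop := hdropgen k htake
      obtain ⟨hmemk, hlong⟩ := hmax k hklen
      -- the factor equality
      have hfac : F.getD k [] = List.replicate (Nat.fib (k+1)) a := by
        match k, IH, hkn, htake, hklen, hmemk, hlong, hdrop with
        | 0, IH, hkn, htake, hklen, hmemk, hlong, hdrop =>
          rcases hmemk with ⟨i, hi1, hi2, _⟩ | ⟨c, hc⟩
          · omega
          · have := hrep 0 hklen
            rw [hc] at this ⊢
            simpa using this
        | 1, IH, hkn, htake, hklen, hmemk, hlong, hdrop =>
          rcases hmemk with ⟨i, hi1, hi2, _⟩ | ⟨c, hc⟩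
          · omega
          · have := hrep 1 hklen
            rw [hc] at this ⊢
            simpa using this
        | (k+2), IH, hkn, htake, hklen, hmemk, hlong, hdrop =>
          rw [show k+2+3 = k+5 from rfl] at hkn
          rw [show k+2+2 = k+4 from rfl] at htake hdrop
          rw [show k+2+1 = k+3 from rfl]
          have hm1 : Nat.fib (k+3) ≤ Nat.fib (k+5) := Nat.fib_mono (by omega)
          have hm2 : Nat.fib (k+4) ≤ Nat.fib (k+5) := Nat.fib_mono (by omega)
          -- upper bound on the length
          have hub : (F.getD (k+2) []).length ≤ Nat.fib (k+3) := by
            rcases hmemk with ⟨i, hi1, hi2, heq⟩ | ⟨c, hc⟩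
            · obtain ⟨i', rfl⟩ : ∃ i', i = i' + 1 := ⟨i - 1, by omega⟩
              have hn1 : Nat.fib (i'+3) ≤ Nat.fib (k+5) := Nat.fib_mono (by omega)
              have hn2 : Nat.fib (i'+4) ≤ Nat.fib (k+5) := Nat.fib_mono (by omega)
              have e1 := (IH i' (by omega) (by omega)).2.1
              have e2 := (IH (i'+1) (by omega)
                (by rw [show i'+1+3 = i'+4 from rfl]; omega)).2.1
              rw [show i'+1+1 = i'+2 from rfl] at e2
              simp only [Nat.add_sub_cancel] at heq
              rw [heq, e1, e2]
              simp only [List.length_append, List.length_replicate]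
              have hn3 : Nat.fib (i'+3) ≤ Nat.fib (k+3) := Nat.fib_mono (by omega)
              have hft := hfib i'
              omega
            · rw [hc]
              have hpos : 0 < Nat.fib (k+3) := Nat.fib_pos.2 (by omega)
              simp only [List.length_cons, List.length_nil]
              omega
          -- lower bound via the dictionary word F_k ++ F_{k+1}
          have e1 := (IH k (by omega) (by omega)).2.1
          have e2 := (IH (k+1) (by omega)
            (by rw [show k+1+3 = k+4 from rfl]; omega)).2.1
          rw [show k+1+1 = k+2 from rfl] at e2
          have hwdict : List.replicate (Nat.fib (k+3)) a ∈ LZMWDict F (k+2) := by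
            left
            refine ⟨k+1, by omega, by omega, ?_⟩
            simp only [Nat.add_sub_cancel]
            rw [e1, e2, ← List.replicate_add, ← hfib k]
          have hwpre : List.replicate (Nat.fib (k+3)) a <+: (F.drop (k+2)).flatten := by
            rw [hdrop]
            refine ⟨List.replicate (n - (Nat.fib (k+4) - 1) - Nat.fib (k+3)) a, ?_⟩
            rw [← List.replicate_add]
            congr 1
            have hf5 := hfib (k+2)
            rw [show k+2+3 = k+5 from rfl, show k+2+2 = k+4 from rfl,
              show k+2+1 = k+3 from rfl] at hf5
            have hp4 : 0 < Nat.fib (k+4) := Nat.fib_pos.2 (by omega)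
            omega
          have hlb := hlong _ hwdict hwpre
          rw [List.length_replicate] at hlb
          have hlen : (F.getD (k+2) []).length = Nat.fib (k+3) := le_antisymm hub hlb
          rw [hrep (k+2) hklen, hlen]
      refine ⟨hklen, hfac, ?_⟩
      rw [htakesucc k hklen, htake, hfac, ← List.replicate_add]
      congr 1
      have hft := hfib k
      have hp : 0 < Nat.fib (k+2) := Nat.fib_pos.2 (by omega)
      omega
  intro x hx hxn
  obtain ⟨h1, h2, _⟩ := main (x-1) (by
    have hx3 : x - 1 + 3 = x + 2 := by omega
    rw [hx3]; exact hxn)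
  refine ⟨h1, ?_⟩
  have hx1 : x - 1 + 1 = x := by omega
  rwa [hx1] at h2
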